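/- Let 0 ≤ k ≤ n and let v : B_q(n) → ℝ satisfy A_n v = λ_{n,k} v, where λ_{m,j} = (φ·q^{m−j} − q^j)/(q−1). Then A_{n+1}(q^k·ι(v) + θ_n(v)) = λ_{n+1,k}·(q^k·ι(v) + θ_n(v)) and A_{n+1}(φ·q^{n−k}·ι(v) − θ_n(v)) = λ_{n+1,k+1}·(φ·q^{n−k}·ι(v) − θ_n(v)). -/

import Mathlib

open Module

open Classical in
noncomputable def adjEnt (q : ℕ) (φ : ℝ) {F : Type} [Field F] {V : Type} [AddCommGroup V]
    [Module F V] (X Y : Submodule F V) : ℝ :=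
  if Y ≤ X ∧ finrank F X = finrank F Y + 1 then 1
  else if X ≤ Y ∧ finrank F Y = finrank F X + 1 then φ * (q : ℝ) ^ finrank F X
  else if X = Y then ((φ - 1) / ((q : ℝ) - 1)) * (q : ℝ) ^ finrank F X
  else 0

noncomputable def lamEV (q : ℕ) (φ : ℝ) (n k : ℕ) : ℝ :=
  (φ * (q : ℝ) ^ (n - k) - (q : ℝ) ^ k) / ((q : ℝ) - 1)

noncomputable instance (F V : Type) [Field F] [AddCommGroup V] [Module F V] [Finite V] :
    Fintype (Submodule F V) := Fintype.ofFinite _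

noncomputable def H0 (F : Type) [Field F] (n : ℕ) : Submodule F (Fin (n + 1) → F) :=
  LinearMap.ker (LinearMap.proj (R := F) (φ := fun _ : Fin (n + 1) => F) (Fin.last n))

open Classical in
noncomputable instance (F : Type) [Field F] [Fintype F] (n : ℕ) :
    Fintype {X : Submodule F (Fin (n + 1) → F) // X ≤ H0 F n} := Fintype.ofFinite _

-- `ι(v)`: extend a vector on `B_q(n)` (identified with the subspaces of `F^{n+1}`
-- contained in the hyperplane `H₀`) by zero on `B∂(n+1)`.
open Classical in
noncomputable def iota (F : Type) [Field F] [Fintype F] (n : ℕ)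
    (v : {X : Submodule F (Fin (n + 1) → F) // X ≤ H0 F n} → ℝ) :
    Submodule F (Fin (n + 1) → F) → ℝ :=
  fun X => if h : X ≤ H0 F n then v ⟨X, h⟩ else 0

-- `θ_n(v)`: the vector on `B_q(n+1)` vanishing on subspaces contained in `H₀` and with
-- value `v(Y ∩ H₀)` at each `Y ∈ B∂(n+1)`.
open Classical in
noncomputable def theta (F : Type) [Field F] [Fintype F] (n : ℕ)
    (v : {X : Submodule F (Fin (n + 1) → F) // X ≤ H0 F n} → ℝ) :
    Submodule F (Fin (n + 1) → F) → ℝ :=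
  fun Y => if Y ≤ H0 F n then 0 else v ⟨Y ⊓ H0 F n, inf_le_right⟩


section Stmt18Aux
set_option linter.unusedSectionVars false
open Module Submodule Finset

variable {F : Type} [Field F] [Fintype F] {n : ℕ}

lemma st18_mem_H0 {x : Fin (n+1) → F} : x ∈ H0 F n ↔ x (Fin.last n) = 0 := Iff.rfl

lemma st18_finrank_H0 : finrank F ↥(H0 F n) = n := by
  have h := LinearMap.finrank_range_add_finrank_ker
    (LinearMap.proj (R := F) (φ := fun _ : Fin (n + 1) => F) (Fin.last n))
  have hr : LinearMap.range (LinearMap.proj (R := F) (φ := fun _ : Fin (n + 1) => F) (Fin.last n)) = ⊤ := by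
    rw [LinearMap.range_eq_top]
    intro c
    exact ⟨Pi.single (Fin.last n) c, by simp⟩
  rw [hr, finrank_top, Module.finrank_self, Module.finrank_fin_fun] at h
  unfold H0; omega

-- rank of sup with span of a new vector
lemma st18_finrank_sup_span {X : Submodule F (Fin (n+1) → F)} {x : Fin (n+1) → F} (hx : x ∉ X) :
    finrank F ↥(X ⊔ span F {x}) = finrank F ↥X + 1 := by
  have hx0 : x ≠ 0 := fun h => hx (h ▸ X.zero_mem)
  have hd : X ⊓ span F {x} = ⊥ := by
    rw [← disjoint_iff]
    exact (disjoint_span_singleton' hx0).mpr hx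
  have h := finrank_sup_add_finrank_inf_eq X (span F {x})
  rw [hd, finrank_bot, finrank_span_singleton hx0] at h
  omega

lemma st18_finrank_le_H0 {X : Submodule F (Fin (n+1) → F)} (hX : X ≤ H0 F n) :
    finrank F ↥X ≤ n := by
  have h := Submodule.finrank_mono (R := F) hX
  rwa [st18_finrank_H0] at h

-- if X ⊄ H0 then X ⊔ H0 = ⊤ and rank of X ⊓ H0
lemma st18_finrank_inf_H0 {X : Submodule F (Fin (n+1) → F)} (hX : ¬ X ≤ H0 F n) :
    finrank F ↥(X ⊓ H0 F n) + 1 = finrank F ↥X := by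
  have hlt : H0 F n < X ⊔ H0 F n := by
    rcases SetLike.not_le_iff_exists.mp hX with ⟨x, hxX, hxH⟩
    exact lt_of_le_of_ne le_sup_right (fun h => hxH (h ▸ le_sup_left (a := X) (b := H0 F n) hxX))
  have h1 : finrank F ↥(X ⊔ H0 F n) = n + 1 := by
    have := Submodule.finrank_lt_finrank_of_lt hlt
    have h2 := Submodule.finrank_le (X ⊔ H0 F n)
    rw [Module.finrank_fin_fun] at h2
    rw [st18_finrank_H0] at this
    omega
  have h := finrank_sup_add_finrank_inf_eq X (H0 F n)
  rw [h1, st18_finrank_H0] at h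
  have hXle := Submodule.finrank_le X
  rw [Module.finrank_fin_fun] at hXle
  -- need finrank X ≥ 1
  omega

-- exists element with last coordinate 1
lemma st18_exists_last_one {X : Submodule F (Fin (n+1) → F)} (hX : ¬ X ≤ H0 F n) :
    ∃ x ∈ X, x (Fin.last n) = 1 := by
  rcases SetLike.not_le_iff_exists.mp hX with ⟨y, hyX, hyH⟩
  rw [st18_mem_H0] at hyH
  refine ⟨(y (Fin.last n))⁻¹ • y, X.smul_mem _ hyX, ?_⟩
  simp [inv_mul_cancel₀ hyH]
open Classical in
lemma st18_aop_eq (q : ℕ) (φ : ℝ) (w : Submodule F (Fin (n+1) → F) → ℝ)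
    (X : Submodule F (Fin (n+1) → F)) :
    ∑ Y : Submodule F (Fin (n+1) → F), adjEnt q φ X Y * w Y
      = (∑ Y ∈ univ.filter (fun Y => Y ≤ X ∧ finrank F X = finrank F Y + 1), w Y)
        + φ * (q : ℝ) ^ finrank F X *
          (∑ Y ∈ univ.filter (fun Y => X ≤ Y ∧ finrank F Y = finrank F X + 1), w Y)
        + ((φ - 1) / ((q : ℝ) - 1)) * (q : ℝ) ^ finrank F X * w X := by
  rw [Finset.mul_sum, Finset.sum_filter, Finset.sum_filter]
  have hX : ((φ - 1) / ((q : ℝ) - 1)) * (q : ℝ) ^ finrank F X * w X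
      = ∑ Y : Submodule F (Fin (n+1) → F),
        (if X = Y then ((φ - 1) / ((q : ℝ) - 1)) * (q : ℝ) ^ finrank F X * w Y else 0) := by
    rw [Finset.sum_ite_eq]
    simp
  rw [hX, ← Finset.sum_add_distrib, ← Finset.sum_add_distrib]
  refine Finset.sum_congr rfl fun Y _ => ?_
  unfold adjEnt
  by_cases h1 : Y ≤ X ∧ finrank F ↥X = finrank F ↥Y + 1
  · have h2 : ¬(X ≤ Y ∧ finrank F ↥Y = finrank F ↥X + 1) := by rintro ⟨_, h⟩; omega
    have h3 : ¬(X = Y) := by rintro rfl; omega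
    rw [if_pos h1, if_pos h1, if_neg h2, if_neg h3]; ring
  · by_cases h2 : X ≤ Y ∧ finrank F ↥Y = finrank F ↥X + 1
    · have h3 : ¬(X = Y) := by rintro rfl; omega
      rw [if_neg h1, if_neg h1, if_pos h2, if_pos h2, if_neg h3]; ring
    · by_cases h3 : X = Y
      · rw [if_neg h1, if_neg h1, if_neg h2, if_neg h2, if_pos h3, if_pos h3]; ring
      · rw [if_neg h1, if_neg h1, if_neg h2, if_neg h2, if_neg h3, if_neg h3]; ring

open Classical in
lemma st18_card_module (M : Type*) [AddCommGroup M] [Module F M] [Finite M] :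
    Nat.card M = Fintype.card F ^ finrank F M := by
  have : Fintype M := Fintype.ofFinite _
  rw [Nat.card_eq_fintype_card]
  exact card_eq_pow_finrank

open Classical in
lemma st18_card_C1 {X : Submodule F (Fin (n+1) → F)} (hX : X ≤ H0 F n) :
    (univ.filter (fun Y : Submodule F (Fin (n+1) → F) =>
        X ≤ Y ∧ finrank F ↥Y = finrank F ↥X + 1 ∧ ¬ Y ≤ H0 F n)).card
      = Fintype.card F ^ (n - finrank F ↥X) := by
  classical
  set q := Fintype.card F
  set d := finrank F ↥X with hd
  set e : Fin (n+1) → F := Pi.single (Fin.last n) 1 with he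
  have helast : e (Fin.last n) = 1 := by simp [he]
  set S := univ.filter (fun Y : Submodule F (Fin (n+1) → F) =>
      X ≤ Y ∧ finrank F ↥Y = finrank F ↥X + 1 ∧ ¬ Y ≤ H0 F n) with hS
  set g : ↥(H0 F n) → Submodule F (Fin (n+1) → F) := fun u => X ⊔ span F {e + ↑u} with hg
  -- e + u ∉ H0 for u ∈ H0
  have hnot : ∀ u : ↥(H0 F n), e + ↑u ∉ H0 F n := by
    intro u h
    rw [st18_mem_H0] at h
    have := u.2
    rw [st18_mem_H0] at this
    simp [helast, this] at h
  have hmaps : ∀ u : ↥(H0 F n), g u ∈ S := by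
    intro u
    have hnX : e + ↑u ∉ X := fun h => hnot u (hX h)
    rw [hS, Finset.mem_filter]
    refine ⟨Finset.mem_univ _, le_sup_left, ?_, ?_⟩
    · rw [hg]; exact st18_finrank_sup_span hnX
    · intro h
      exact hnot u (h (le_sup_right (a := X) (mem_span_singleton_self _)))
  -- Y ⊓ H0 = X for Y ∈ S
  have hinf : ∀ Y ∈ S, Y ⊓ H0 F n = X := by
    intro Y hY
    rw [hS, Finset.mem_filter] at hY
    obtain ⟨-, hXY, hrk, hYH⟩ := hY
    have h1 : X ≤ Y ⊓ H0 F n := le_inf hXY hX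
    have h2 := st18_finrank_inf_H0 hYH
    exact (Submodule.eq_of_le_of_finrank_eq h1 (by omega)).symm
  -- fiber description
  have hfiber : ∀ Y ∈ S, ∀ u : ↥(H0 F n), g u = Y ↔ e + ↑u ∈ Y := by
    intro Y hY u
    constructor
    · rintro rfl
      exact le_sup_right (a := X) (mem_span_singleton_self _)
    · intro h
      rw [hS, Finset.mem_filter] at hY
      obtain ⟨-, hXY, hrk, hYH⟩ := hY
      have hle : g u ≤ Y := sup_le hXY ((span_singleton_le_iff_mem _ _).mpr h)
      have hnX : e + ↑u ∉ X := fun h => hnot u (hX h)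
      exact Submodule.eq_of_le_of_finrank_eq hle (by rw [hg, st18_finrank_sup_span hnX]; omega)
  -- each fiber has card q ^ d
  have hcardfiber : ∀ Y ∈ S, (univ.filter (fun u : ↥(H0 F n) => g u = Y)).card = q ^ d := by
    intro Y hY
    have hYS := hY
    rw [hS, Finset.mem_filter] at hYS
    obtain ⟨-, hXY, hrk, hYH⟩ := hYS
    obtain ⟨x, hxY, hx1⟩ := st18_exists_last_one hYH
    have hxH : x - e ∈ H0 F n := by rw [st18_mem_H0]; simp [hx1, helast]
    set u0 : ↥(H0 F n) := ⟨x - e, hxH⟩ with hu0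
    have heu0 : e + ↑u0 = x := by rw [hu0]; ring_nf
    have key : ∀ u : ↥(H0 F n), g u = Y ↔ (↑(u - u0) : Fin (n+1) → F) ∈ X := by
      intro u
      rw [hfiber Y hY u]
      constructor
      · intro h
        have hmem : (↑(u - u0) : Fin (n+1) → F) ∈ Y ⊓ H0 F n := by
          refine ⟨?_, (u - u0).2⟩
          have : (↑(u - u0) : Fin (n+1) → F) = (e + ↑u) - (e + ↑u0) := by
            push_cast; ring
          rw [this, heu0]
          exact Y.sub_mem h hxY
        rw [hinf Y hY] at hmem
        exact hmem
      · intro h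
        have : e + ↑u = x + ↑(u - u0) := by
          rw [← heu0]; push_cast; ring
        rw [this]
        exact Y.add_mem hxY (hXY h)
    calc (univ.filter (fun u : ↥(H0 F n) => g u = Y)).card
        = (univ.filter (fun u : ↥(H0 F n) => (↑(u - u0) : Fin (n+1) → F) ∈ X)).card := by
          congr 1; apply Finset.filter_congr; intro u _; simp only [key u]
      _ = (univ.filter (fun u : ↥(H0 F n) => (↑u : Fin (n+1) → F) ∈ X)).card := by
          apply Finset.card_nbij' (fun u => u - u0) (fun u => u + u0)
          · intro u hu
            simpa using (Finset.mem_filter.mp hu).2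
          · intro u hu
            simp only [Finset.mem_filter, Finset.mem_univ, true_and] at hu ⊢
            simpa using hu
          · intro u _; simp
          · intro u _; simp
      _ = q ^ d := by
          rw [← Fintype.card_subtype]
          have e1 : {u : ↥(H0 F n) // (↑u : Fin (n+1) → F) ∈ X} ≃
              ↥(Submodule.comap (H0 F n).subtype X) :=
            Equiv.subtypeEquivRight (by intro u; simp [Submodule.mem_comap])
          rw [Fintype.card_congr e1, ← Nat.card_eq_fintype_card, st18_card_module (F := F)]
          congr 1
          rw [hd]
          exact LinearEquiv.finrank_eq (Submodule.comapSubtypeEquivOfLe hX)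
  -- total count
  have htot : (univ : Finset ↥(H0 F n)).card = ∑ Y ∈ S, (univ.filter (fun u => g u = Y)).card :=
    Finset.card_eq_sum_card_fiberwise (fun u _ => hmaps u)
  have hHcard : (univ : Finset ↥(H0 F n)).card = q ^ n := by
    rw [Finset.card_univ, ← Nat.card_eq_fintype_card, st18_card_module (F := F), st18_finrank_H0]
  have hsum : q ^ n = S.card * q ^ d := by
    rw [← hHcard, htot, Finset.sum_congr rfl hcardfiber, Finset.sum_const, smul_eq_mul]
  have hdn : d ≤ n := st18_finrank_le_H0 hX
  have hq2 : 2 ≤ q := Fintype.one_lt_card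
  have hpow : q ^ n = q ^ (n - d) * q ^ d := by rw [← pow_add]; congr 1; omega
  have := hsum.symm.trans hpow
  exact Nat.eq_of_mul_eq_mul_right (pow_pos (by omega : 0 < q) d) this

open Classical in
lemma st18_sum_C3 {X : Submodule F (Fin (n+1) → F)} (hX : ¬ X ≤ H0 F n)
    (f : Submodule F (Fin (n+1) → F) → ℝ) (hf : ∀ U, ¬ U ≤ H0 F n → f U = 0) :
    ∑ Y ∈ univ.filter (fun Y : Submodule F (Fin (n+1) → F) =>
        X ≤ Y ∧ finrank F ↥Y = finrank F ↥X + 1), f (Y ⊓ H0 F n)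
      = ∑ U ∈ univ.filter (fun U : Submodule F (Fin (n+1) → F) =>
        X ⊓ H0 F n ≤ U ∧ finrank F ↥U = finrank F ↥(X ⊓ H0 F n) + 1), f U := by
  classical
  set Z := X ⊓ H0 F n with hZ
  have hZrk : finrank F ↥Z + 1 = finrank F ↥X := st18_finrank_inf_H0 hX
  have step1 : ∑ Y ∈ univ.filter (fun Y : Submodule F (Fin (n+1) → F) =>
        X ≤ Y ∧ finrank F ↥Y = finrank F ↥X + 1), f (Y ⊓ H0 F n)
      = ∑ U ∈ univ.filter (fun U : Submodule F (Fin (n+1) → F) =>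
        (Z ≤ U ∧ finrank F ↥U = finrank F ↥Z + 1) ∧ U ≤ H0 F n), f U := by
    refine Finset.sum_nbij' (fun Y => Y ⊓ H0 F n) (fun U => X ⊔ U) ?_ ?_ ?_ ?_ ?_
    · intro Y hY
      beta_reduce
      rw [Finset.mem_filter] at hY ⊢
      obtain ⟨-, hXY, hrk⟩ := hY
      have hYH : ¬ Y ≤ H0 F n := fun h => hX (le_trans hXY h)
      have h1 := st18_finrank_inf_H0 hYH
      exact ⟨Finset.mem_univ _, ⟨inf_le_inf_right _ hXY, by omega⟩, inf_le_right⟩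
    · intro U hU
      beta_reduce
      rw [Finset.mem_filter] at hU ⊢
      obtain ⟨-, ⟨hZU, hrk⟩, hUH⟩ := hU
      have hXU : X ⊓ U = Z :=
        le_antisymm (le_inf inf_le_left (inf_le_right.trans hUH)) (le_inf inf_le_left hZU)
      have h := finrank_sup_add_finrank_inf_eq X U
      rw [hXU] at h
      exact ⟨Finset.mem_univ _, le_sup_left, by omega⟩
    · intro Y hY
      beta_reduce
      rw [Finset.mem_filter] at hY
      obtain ⟨-, hXY, hrk⟩ := hY
      have hYH : ¬ Y ≤ H0 F n := fun h => hX (le_trans hXY h)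
      have h1 := st18_finrank_inf_H0 hYH
      have hXYinf : X ⊓ (Y ⊓ H0 F n) = Z := by
        rw [← inf_assoc, inf_eq_left.mpr hXY]
      have h := finrank_sup_add_finrank_inf_eq X (Y ⊓ H0 F n)
      rw [hXYinf] at h
      refine Submodule.eq_of_le_of_finrank_eq (sup_le hXY inf_le_left) (by omega)
    · intro U hU
      beta_reduce
      rw [Finset.mem_filter] at hU
      obtain ⟨-, ⟨hZU, hrk⟩, hUH⟩ := hU
      have hXU : X ⊓ U = Z :=
        le_antisymm (le_inf inf_le_left (inf_le_right.trans hUH)) (le_inf inf_le_left hZU)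
      have h := finrank_sup_add_finrank_inf_eq X U
      rw [hXU] at h
      have hsupH : ¬ X ⊔ U ≤ H0 F n := fun hh => hX (le_trans le_sup_left hh)
      have h2 := st18_finrank_inf_H0 hsupH
      exact (Submodule.eq_of_le_of_finrank_eq (le_inf le_sup_right hUH) (by omega)).symm
    · intro Y _; rfl
  rw [step1]
  refine Finset.sum_subset ?_ ?_
  · intro U hU
    rw [Finset.mem_filter] at hU ⊢
    exact ⟨Finset.mem_univ _, hU.2.1⟩
  · intro U hU hU2
    rw [Finset.mem_filter] at hU hU2
    push_neg at hU2
    exact hf U (hU2 (Finset.mem_univ _) hU.2)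

open Classical in
lemma st18_card_C2 {X W : Submodule F (Fin (n+1) → F)} (hX : ¬ X ≤ H0 F n)
    (hWZ : W ≤ X ⊓ H0 F n) (hWrk : finrank F ↥(X ⊓ H0 F n) = finrank F ↥W + 1) :
    (univ.filter (fun Y : Submodule F (Fin (n+1) → F) =>
        (Y ≤ X ∧ finrank F ↥X = finrank F ↥Y + 1 ∧ Y ≠ X ⊓ H0 F n) ∧ Y ⊓ H0 F n = W)).card
      = Fintype.card F := by
  classical
  set Z := X ⊓ H0 F n with hZdef
  have hZH : Z ≤ H0 F n := inf_le_right
  have hZX : Z ≤ X := inf_le_left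
  have hZrk : finrank F ↥Z + 1 = finrank F ↥X := st18_finrank_inf_H0 hX
  have hWH : W ≤ H0 F n := le_trans hWZ hZH
  have hWlt : W < Z := lt_of_le_of_ne hWZ (fun h => by rw [h] at hWrk; omega)
  obtain ⟨z, hzZ, hzW⟩ := SetLike.exists_of_lt hWlt
  obtain ⟨x, hxX, hx1⟩ := st18_exists_last_one hX
  have hzH : z (Fin.last n) = 0 := st18_mem_H0.mp (hZH hzZ)
  set f : F → Submodule F (Fin (n+1) → F) := fun c => W ⊔ span F {x + c • z} with hf
  have hlast : ∀ c : F, (x + c • z) (Fin.last n) = 1 := by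
    intro c; simp [hx1, hzH]
  have hnotH : ∀ c : F, x + c • z ∉ H0 F n := by
    intro c h; rw [st18_mem_H0, hlast c] at h; exact one_ne_zero h
  have hnotW : ∀ c : F, x + c • z ∉ W := fun c h => hnotH c (hWH h)
  have hfrk : ∀ c : F, finrank F ↥(f c) = finrank F ↥W + 1 := fun c => st18_finrank_sup_span (hnotW c)
  have hfinf : ∀ c : F, f c ⊓ H0 F n = W := by
    intro c
    have h1 : W ≤ f c ⊓ H0 F n := le_inf le_sup_left hWH
    have h2 : f c ⊓ H0 F n < f c := by
      refine lt_of_le_of_ne inf_le_left (fun h => ?_)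
      have hm : x + c • z ∈ f c := le_sup_right (a := W) (mem_span_singleton_self _)
      rw [← h] at hm
      exact hnotH c hm.2
    have h3 := Submodule.finrank_lt_finrank_of_lt h2
    rw [hfrk c] at h3
    have h4 := Submodule.finrank_mono (R := F) h1
    exact (Submodule.eq_of_le_of_finrank_eq h1 (by omega)).symm
  have hzf : ∀ c : F, z ∉ f c := by
    intro c h
    exact hzW ((hfinf c) ▸ (⟨h, hZH hzZ⟩ : z ∈ f c ⊓ H0 F n))
  have hmem : ∀ c : F, (f c ≤ X ∧ finrank F ↥X = finrank F ↥(f c) + 1 ∧ f c ≠ Z) ∧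
      f c ⊓ H0 F n = W := by
    intro c
    refine ⟨⟨?_, ?_, ?_⟩, hfinf c⟩
    · exact sup_le (le_trans hWZ hZX) ((span_singleton_le_iff_mem _ _).mpr
        (X.add_mem hxX (X.smul_mem c (hZX hzZ))))
    · rw [hfrk c]; omega
    · intro h
      have : x + c • z ∈ Z := h ▸ le_sup_right (a := W) (mem_span_singleton_self _)
      exact hnotH c (hZH this)
  have hinj : Function.Injective f := by
    intro c c' h
    by_contra hne
    have h1 : x + c • z ∈ f c := le_sup_right (a := W) (mem_span_singleton_self _)
    have h2 : x + c' • z ∈ f c := h ▸ le_sup_right (a := W) (mem_span_singleton_self _)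
    have h3 : (c - c') • z ∈ f c := by
      have : (c - c') • z = (x + c • z) - (x + c' • z) := by
        rw [sub_smul]; ring
      rw [this]; exact (f c).sub_mem h1 h2
    have h4 : z ∈ f c := by
      have := (f c).smul_mem (c - c')⁻¹ h3
      rwa [smul_smul, inv_mul_cancel₀ (sub_ne_zero.mpr hne), one_smul] at this
    exact hzf c h4
  have himage : univ.filter (fun Y : Submodule F (Fin (n+1) → F) =>
      (Y ≤ X ∧ finrank F ↥X = finrank F ↥Y + 1 ∧ Y ≠ Z) ∧ Y ⊓ H0 F n = W)
      = Finset.image f univ := by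
    ext Y
    simp only [Finset.mem_filter, Finset.mem_univ, true_and, Finset.mem_image]
    constructor
    · rintro ⟨⟨hYX, hYrk, hYZ⟩, hYW⟩
      have hYH : ¬ Y ≤ H0 F n := by
        intro h
        exact hYZ (Submodule.eq_of_le_of_finrank_eq (le_inf hYX h) (by omega))
      obtain ⟨y, hyY, hy1⟩ := st18_exists_last_one hYH
      have hyx : y - x ∈ Z := by
        refine ⟨X.sub_mem (hYX hyY) hxX, show y - x ∈ H0 F n from st18_mem_H0.mpr ?_⟩
        simp [hy1, hx1]
      have hZspan : W ⊔ span F {z} = Z := by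
        refine Submodule.eq_of_le_of_finrank_eq (sup_le hWZ
          ((span_singleton_le_iff_mem _ _).mpr hzZ)) ?_
        rw [st18_finrank_sup_span hzW]; omega
      rw [← hZspan] at hyx
      obtain ⟨w, hw, t, ht, hwt⟩ := Submodule.mem_sup.mp hyx
      obtain ⟨c, rfl⟩ := Submodule.mem_span_singleton.mp ht
      refine ⟨c, ?_⟩
      have hWY : W ≤ Y := le_of_eq_of_le hYW.symm inf_le_left
      have hmemY : x + c • z ∈ Y := by
        have hyw : x + c • z = y - w := by
          have h5 : (w + c • z) + x = (y - x) + x := by rw [hwt]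
          rw [sub_add_cancel] at h5
          rw [← h5]; abel
        rw [hyw]
        exact Y.sub_mem hyY (hWY hw)
      have hfY : f c ≤ Y := sup_le hWY ((span_singleton_le_iff_mem _ _).mpr hmemY)
      exact Submodule.eq_of_le_of_finrank_eq hfY (by rw [hfrk c]; omega)
    · rintro ⟨c, rfl⟩
      exact hmem c
  rw [himage, Finset.card_image_of_injective _ hinj, Finset.card_univ]

open Classical in
lemma st18_sum_C2 {X : Submodule F (Fin (n+1) → F)} (hX : ¬ X ≤ H0 F n)
    (f : Submodule F (Fin (n+1) → F) → ℝ) :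
    ∑ Y ∈ univ.filter (fun Y : Submodule F (Fin (n+1) → F) =>
        Y ≤ X ∧ finrank F ↥X = finrank F ↥Y + 1 ∧ Y ≠ X ⊓ H0 F n), f (Y ⊓ H0 F n)
      = (Fintype.card F : ℝ) * ∑ W ∈ univ.filter (fun W : Submodule F (Fin (n+1) → F) =>
        W ≤ X ⊓ H0 F n ∧ finrank F ↥(X ⊓ H0 F n) = finrank F ↥W + 1), f W := by
  classical
  have hZrk : finrank F ↥(X ⊓ H0 F n) + 1 = finrank F ↥X := st18_finrank_inf_H0 hX
  set S' := univ.filter (fun Y : Submodule F (Fin (n+1) → F) =>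
      Y ≤ X ∧ finrank F ↥X = finrank F ↥Y + 1 ∧ Y ≠ X ⊓ H0 F n) with hS'
  set T := univ.filter (fun W : Submodule F (Fin (n+1) → F) =>
      W ≤ X ⊓ H0 F n ∧ finrank F ↥(X ⊓ H0 F n) = finrank F ↥W + 1) with hT
  have hmaps : ∀ Y ∈ S', Y ⊓ H0 F n ∈ T := by
    intro Y hY
    rw [hS', Finset.mem_filter] at hY
    obtain ⟨-, hYX, hrk, hYZ⟩ := hY
    have hYH : ¬ Y ≤ H0 F n := by
      intro h
      exact hYZ (Submodule.eq_of_le_of_finrank_eq (le_inf hYX h) (by omega))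
    have h1 := st18_finrank_inf_H0 hYH
    rw [hT, Finset.mem_filter]
    exact ⟨Finset.mem_univ _, inf_le_inf_right _ hYX, by omega⟩
  rw [← Finset.sum_fiberwise_of_maps_to' hmaps f]
  rw [Finset.mul_sum]
  refine Finset.sum_congr rfl fun W hW => ?_
  have hWT := hW
  rw [hT, Finset.mem_filter] at hWT
  obtain ⟨-, hWZ, hWrk⟩ := hWT
  rw [Finset.sum_const, hS', Finset.filter_filter]
  have hcard := st18_card_C2 hX hWZ hWrk
  have : (fun Y : Submodule F (Fin (n+1) → F) =>
      (Y ≤ X ∧ finrank F ↥X = finrank F ↥Y + 1 ∧ Y ≠ X ⊓ H0 F n) ∧ Y ⊓ H0 F n = W)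
      = (fun Y => (Y ≤ X ∧ finrank F ↥X = finrank F ↥Y + 1 ∧ Y ≠ X ⊓ H0 F n) ∧ Y ⊓ H0 F n = W) := rfl
  rw [show (univ.filter (fun Y : Submodule F (Fin (n+1) → F) =>
      (Y ≤ X ∧ finrank F ↥X = finrank F ↥Y + 1 ∧ Y ≠ X ⊓ H0 F n) ∧ Y ⊓ H0 F n = W)).card
      = Fintype.card F from hcard]
  rw [nsmul_eq_mul]
-- covering lemma: if X ≤ H0 ≤ ... and Y covers X outside H0 then Y ⊓ H0 = X
lemma st18_inf_cover {X Y : Submodule F (Fin (n+1) → F)} (hX : X ≤ H0 F n) (hXY : X ≤ Y)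
    (hrk : finrank F ↥Y = finrank F ↥X + 1) (hYH : ¬ Y ≤ H0 F n) : Y ⊓ H0 F n = X := by
  have h1 : X ≤ Y ⊓ H0 F n := le_inf hXY hX
  have h2 := st18_finrank_inf_H0 hYH
  exact (Submodule.eq_of_le_of_finrank_eq h1 (by omega)).symm


end Stmt18Aux

set_option linter.unusedVariables false in
open Finset in
theorem stmt_18 (q n k : ℕ) (F : Type) [Field F] [Fintype F] (hq : Fintype.card F = q)
    (φ : ℝ) (hφ : 0 < φ) (hk : k ≤ n)
    (v : {X : Submodule F (Fin (n + 1) → F) // X ≤ H0 F n} → ℝ)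
    (hv : (Matrix.of fun X Y : {X : Submodule F (Fin (n + 1) → F) // X ≤ H0 F n} =>
        adjEnt q φ X.1 Y.1).mulVec v = lamEV q φ n k • v) :
    (Matrix.of fun X Y : Submodule F (Fin (n + 1) → F) => adjEnt q φ X Y).mulVec
        ((q : ℝ) ^ k • iota F n v + theta F n v) =
      lamEV q φ (n + 1) k • ((q : ℝ) ^ k • iota F n v + theta F n v) ∧
    (Matrix.of fun X Y : Submodule F (Fin (n + 1) → F) => adjEnt q φ X Y).mulVec
        ((φ * (q : ℝ) ^ (n - k)) • iota F n v - theta F n v) =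
      lamEV q φ (n + 1) (k + 1) • ((φ * (q : ℝ) ^ (n - k)) • iota F n v - theta F n v) := by
  classical
  subst hq
  set q := Fintype.card F with hqdef
  obtain ⟨m, rfl⟩ : ∃ m, n = k + m := ⟨n - k, by omega⟩
  have e1 : k + m - k = m := by omega
  have e2 : k + m + 1 - k = m + 1 := by omega
  have e3 : k + m + 1 - (k + 1) = m := by omega
  have hq2 : 2 ≤ q := Fintype.one_lt_card
  have hq1 : ((q : ℝ) - 1) ≠ 0 := by
    have : (2 : ℝ) ≤ (q : ℝ) := by exact_mod_cast hq2
    intro h; nlinarith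
  -- basic value lemmas
  have hιzero : ∀ U : Submodule F (Fin (k+m+1) → F), ¬ U ≤ H0 F (k+m) → iota F (k+m) v U = 0 :=
    fun U h => dif_neg h
  have hιv : ∀ (U : Submodule F (Fin (k+m+1) → F)) (h : U ≤ H0 F (k+m)),
      iota F (k+m) v U = v ⟨U, h⟩ := fun U h => dif_pos h
  have hθ0 : ∀ U : Submodule F (Fin (k+m+1) → F), U ≤ H0 F (k+m) → theta F (k+m) v U = 0 :=
    fun U h => if_pos h
  have hθv : ∀ U : Submodule F (Fin (k+m+1) → F), ¬ U ≤ H0 F (k+m) →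
      theta F (k+m) v U = iota F (k+m) v (U ⊓ H0 F (k+m)) := by
    intro U h
    rw [show theta F (k+m) v U = if U ≤ H0 F (k+m) then 0 else v ⟨U ⊓ H0 F (k+m), inf_le_right⟩
      from rfl, if_neg h, hιv _ inf_le_right]
  -- matrix application as a sum
  have hmv : ∀ (w : Submodule F (Fin (k+m+1) → F) → ℝ) (X : Submodule F (Fin (k+m+1) → F)),
      (Matrix.of fun X Y : Submodule F (Fin (k+m+1) → F) => adjEnt q φ X Y).mulVec w X
        = ∑ Y : Submodule F (Fin (k+m+1) → F), adjEnt q φ X Y * w Y := fun w X => rfl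
  -- the eigenvector hypothesis, in ambient decomposed form
  have hv' : ∀ (X : Submodule F (Fin (k+m+1) → F)) (hX : X ≤ H0 F (k+m)),
      (∑ Y ∈ univ.filter (fun Y : Submodule F (Fin (k+m+1) → F) =>
          Y ≤ X ∧ finrank F ↥X = finrank F ↥Y + 1), iota F (k+m) v Y)
        + φ * (q : ℝ) ^ (finrank F ↥X) * (∑ Y ∈ univ.filter (fun Y : Submodule F (Fin (k+m+1) → F) =>
          X ≤ Y ∧ finrank F ↥Y = finrank F ↥X + 1), iota F (k+m) v Y)
        + ((φ - 1) / ((q : ℝ) - 1)) * (q : ℝ) ^ (finrank F ↥X) * iota F (k+m) v X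
      = lamEV q φ (k+m) k * iota F (k+m) v X := by
    intro X hX
    have h0 := congrFun hv ⟨X, hX⟩
    simp only [Matrix.mulVec, dotProduct, Matrix.of_apply, Pi.smul_apply,
      smul_eq_mul] at h0
    rw [← st18_aop_eq q φ (iota F (k+m) v) X]
    have hstep1 : ∑ Y : Submodule F (Fin (k+m+1) → F), adjEnt q φ X Y * iota F (k+m) v Y
        = ∑ Y ∈ univ.filter (fun Y : Submodule F (Fin (k+m+1) → F) => Y ≤ H0 F (k+m)),
            adjEnt q φ X Y * iota F (k+m) v Y :=
      (Finset.sum_subset (Finset.filter_subset _ _) (fun Y _ hY => by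
        rw [Finset.mem_filter] at hY
        push_neg at hY
        rw [hιzero Y (hY (Finset.mem_univ _)), mul_zero])).symm
    have hstep2 : ∑ Y ∈ univ.filter (fun Y : Submodule F (Fin (k+m+1) → F) =>
          Y ≤ H0 F (k+m)), adjEnt q φ X Y * iota F (k+m) v Y
        = ∑ Y : {X : Submodule F (Fin (k+m+1) → F) // X ≤ H0 F (k+m)},
            adjEnt q φ X Y.1 * iota F (k+m) v Y.1 :=
      Finset.sum_subtype _ (fun Y => by simp) (fun Y => adjEnt q φ X Y * iota F (k+m) v Y)
    have hstep3 : ∑ Y : {X : Submodule F (Fin (k+m+1) → F) // X ≤ H0 F (k+m)},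
            adjEnt q φ X Y.1 * iota F (k+m) v Y.1
        = ∑ Y : {X : Submodule F (Fin (k+m+1) → F) // X ≤ H0 F (k+m)},
            adjEnt q φ X Y.1 * v Y :=
      Finset.sum_congr rfl fun Y _ => by rw [hιv Y.1 Y.2]
    rw [hstep1, hstep2, hstep3, h0, hιv X hX]
  -- F2 : theta sum on X ≤ H0
  have hF2 : ∀ (X : Submodule F (Fin (k+m+1) → F)), X ≤ H0 F (k+m) →
      (∑ Y : Submodule F (Fin (k+m+1) → F), adjEnt q φ X Y * theta F (k+m) v Y)
        = φ * (q : ℝ) ^ (k+m) * iota F (k+m) v X := by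
    intro X hX
    rw [st18_aop_eq]
    have t1 : ∑ Y ∈ univ.filter (fun Y : Submodule F (Fin (k+m+1) → F) =>
        Y ≤ X ∧ finrank F ↥X = finrank F ↥Y + 1), theta F (k+m) v Y = 0 :=
      Finset.sum_eq_zero fun Y hY =>
        hθ0 Y (le_trans (Finset.mem_filter.mp hY).2.1 hX)
    have t3 : theta F (k+m) v X = 0 := hθ0 X hX
    have t2 : ∑ Y ∈ univ.filter (fun Y : Submodule F (Fin (k+m+1) → F) =>
        X ≤ Y ∧ finrank F ↥Y = finrank F ↥X + 1), theta F (k+m) v Y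
        = (q : ℝ) ^ (k + m - finrank F ↥X) * iota F (k+m) v X := by
      have hcong : ∀ Y ∈ univ.filter (fun Y : Submodule F (Fin (k+m+1) → F) =>
          X ≤ Y ∧ finrank F ↥Y = finrank F ↥X + 1), theta F (k+m) v Y
            = if ¬ Y ≤ H0 F (k+m) then iota F (k+m) v X else 0 := by
        intro Y hY
        rw [Finset.mem_filter] at hY
        obtain ⟨-, hXY, hrk⟩ := hY
        by_cases hYH : Y ≤ H0 F (k+m)
        · rw [hθ0 Y hYH, if_neg (not_not_intro hYH)]
        · rw [hθv Y hYH, if_pos hYH, st18_inf_cover hX hXY hrk hYH]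
      rw [Finset.sum_congr rfl hcong, ← Finset.sum_filter, Finset.filter_filter]
      rw [Finset.filter_congr (q := fun Y : Submodule F (Fin (k+m+1) → F) =>
          X ≤ Y ∧ finrank F ↥Y = finrank F ↥X + 1 ∧ ¬ Y ≤ H0 F (k+m)) (fun Y _ => by tauto)]
      rw [Finset.sum_const, st18_card_C1 hX, nsmul_eq_mul]
      push_cast
      ring
    rw [t1, t2, t3]
    have hdn : finrank F ↥X ≤ k + m := st18_finrank_le_H0 hX
    have hpow : (q:ℝ) ^ (finrank F ↥X) * (q:ℝ) ^ (k + m - finrank F ↥X) = (q:ℝ) ^ (k+m) := by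
      rw [← pow_add]; congr 1; omega
    linear_combination φ * iota F (k+m) v X * hpow
  -- F3 : iota sum on X not ≤ H0
  have hF3 : ∀ (X : Submodule F (Fin (k+m+1) → F)), ¬ X ≤ H0 F (k+m) →
      (∑ Y : Submodule F (Fin (k+m+1) → F), adjEnt q φ X Y * iota F (k+m) v Y)
        = iota F (k+m) v (X ⊓ H0 F (k+m)) := by
    intro X hX
    rw [st18_aop_eq]
    have hZrk := st18_finrank_inf_H0 hX
    have t1 : ∑ Y ∈ univ.filter (fun Y : Submodule F (Fin (k+m+1) → F) =>
        Y ≤ X ∧ finrank F ↥X = finrank F ↥Y + 1), iota F (k+m) v Y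
        = iota F (k+m) v (X ⊓ H0 F (k+m)) := by
      have hcong : ∀ Y ∈ univ.filter (fun Y : Submodule F (Fin (k+m+1) → F) =>
          Y ≤ X ∧ finrank F ↥X = finrank F ↥Y + 1), iota F (k+m) v Y
            = if Y = X ⊓ H0 F (k+m) then iota F (k+m) v (X ⊓ H0 F (k+m)) else 0 := by
        intro Y hY
        rw [Finset.mem_filter] at hY
        obtain ⟨-, hYX, hrk⟩ := hY
        by_cases hYZ : Y = X ⊓ H0 F (k+m)
        · rw [if_pos hYZ, hYZ]
        · rw [if_neg hYZ]
          refine hιzero Y fun hYH => hYZ ?_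
          exact Submodule.eq_of_le_of_finrank_eq (le_inf hYX hYH) (by omega)
      rw [Finset.sum_congr rfl hcong, Finset.sum_ite_eq' _ (X ⊓ H0 F (k+m))
        (fun _ => iota F (k+m) v (X ⊓ H0 F (k+m)))]
      rw [if_pos]
      rw [Finset.mem_filter]
      exact ⟨Finset.mem_univ _, inf_le_left, by omega⟩
    have t2 : ∑ Y ∈ univ.filter (fun Y : Submodule F (Fin (k+m+1) → F) =>
        X ≤ Y ∧ finrank F ↥Y = finrank F ↥X + 1), iota F (k+m) v Y = 0 :=
      Finset.sum_eq_zero fun Y hY =>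
        hιzero Y fun h => hX (le_trans (Finset.mem_filter.mp hY).2.1 h)
    rw [t1, t2, hιzero X hX]
    ring
  -- F4 : theta sum on X not ≤ H0
  have hF4 : ∀ (X : Submodule F (Fin (k+m+1) → F)), ¬ X ≤ H0 F (k+m) →
      (∑ Y : Submodule F (Fin (k+m+1) → F), adjEnt q φ X Y * theta F (k+m) v Y)
        = (q : ℝ) * lamEV q φ (k+m) k * iota F (k+m) v (X ⊓ H0 F (k+m)) := by
    intro X hX
    rw [st18_aop_eq]
    have hZrk := st18_finrank_inf_H0 hX
    have t1 : ∑ Y ∈ univ.filter (fun Y : Submodule F (Fin (k+m+1) → F) =>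
        Y ≤ X ∧ finrank F ↥X = finrank F ↥Y + 1), theta F (k+m) v Y
        = (q : ℝ) * ∑ W ∈ univ.filter (fun W : Submodule F (Fin (k+m+1) → F) =>
            W ≤ X ⊓ H0 F (k+m) ∧ finrank F ↥(X ⊓ H0 F (k+m)) = finrank F ↥W + 1),
            iota F (k+m) v W := by
      have hcong : ∀ Y ∈ univ.filter (fun Y : Submodule F (Fin (k+m+1) → F) =>
          Y ≤ X ∧ finrank F ↥X = finrank F ↥Y + 1), theta F (k+m) v Y
            = if Y ≠ X ⊓ H0 F (k+m) then iota F (k+m) v (Y ⊓ H0 F (k+m)) else 0 := by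
        intro Y hY
        rw [Finset.mem_filter] at hY
        obtain ⟨-, hYX, hrk⟩ := hY
        by_cases hYZ : Y = X ⊓ H0 F (k+m)
        · rw [if_neg (not_not_intro hYZ), hYZ]
          exact hθ0 _ inf_le_right
        · rw [if_pos hYZ]
          refine hθv Y fun hYH => hYZ ?_
          exact Submodule.eq_of_le_of_finrank_eq (le_inf hYX hYH) (by omega)
      rw [Finset.sum_congr rfl hcong, ← Finset.sum_filter, Finset.filter_filter]
      rw [Finset.filter_congr (q := fun Y : Submodule F (Fin (k+m+1) → F) =>
          Y ≤ X ∧ finrank F ↥X = finrank F ↥Y + 1 ∧ Y ≠ X ⊓ H0 F (k+m)) (fun Y _ => by tauto)]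
      rw [st18_sum_C2 hX (iota F (k+m) v)]
    have t2 : ∑ Y ∈ univ.filter (fun Y : Submodule F (Fin (k+m+1) → F) =>
        X ≤ Y ∧ finrank F ↥Y = finrank F ↥X + 1), theta F (k+m) v Y
        = ∑ U ∈ univ.filter (fun U : Submodule F (Fin (k+m+1) → F) =>
            X ⊓ H0 F (k+m) ≤ U ∧ finrank F ↥U = finrank F ↥(X ⊓ H0 F (k+m)) + 1),
            iota F (k+m) v U := by
      rw [Finset.sum_congr rfl (fun Y hY => hθv Y
        (fun h => hX (le_trans (Finset.mem_filter.mp hY).2.1 h)))]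
      exact st18_sum_C3 hX (iota F (k+m) v) hιzero
    have t3 : theta F (k+m) v X = iota F (k+m) v (X ⊓ H0 F (k+m)) := hθv X hX
    rw [t1, t2, t3]
    have hr : finrank F ↥X = finrank F ↥(X ⊓ H0 F (k+m)) + 1 := by omega
    rw [hr, pow_succ]
    linear_combination (q : ℝ) * hv' (X ⊓ H0 F (k+m)) inf_le_right
  -- F1
  have hF1 : ∀ (X : Submodule F (Fin (k+m+1) → F)), X ≤ H0 F (k+m) →
      (∑ Y : Submodule F (Fin (k+m+1) → F), adjEnt q φ X Y * iota F (k+m) v Y)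
        = lamEV q φ (k+m) k * iota F (k+m) v X := by
    intro X hX
    rw [st18_aop_eq]
    exact hv' X hX
  -- algebra identities
  have AlgA : (q:ℝ)^k * lamEV q φ (k+m) k + φ * (q:ℝ)^(k+m) = lamEV q φ (k+m+1) k * (q:ℝ)^k := by
    unfold lamEV; rw [e1, e2]; field_simp; ring
  have AlgB : (q:ℝ)^k + (q:ℝ) * lamEV q φ (k+m) k = lamEV q φ (k+m+1) k := by
    unfold lamEV; rw [e1, e2]; field_simp; ring
  have AlgC : φ * (q:ℝ)^m * lamEV q φ (k+m) k - φ * (q:ℝ)^(k+m)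
      = lamEV q φ (k+m+1) (k+1) * (φ * (q:ℝ)^m) := by
    unfold lamEV; rw [e1, e3]; field_simp; ring
  have AlgD : φ * (q:ℝ)^m - (q:ℝ) * lamEV q φ (k+m) k = - lamEV q φ (k+m+1) (k+1) := by
    unfold lamEV; rw [e1, e3]; field_simp; ring
  constructor
  · funext X
    rw [hmv]
    have hsplit : ∑ Y : Submodule F (Fin (k+m+1) → F),
        adjEnt q φ X Y * ((q:ℝ)^k • iota F (k+m) v + theta F (k+m) v) Y
        = (q:ℝ)^k * (∑ Y : Submodule F (Fin (k+m+1) → F), adjEnt q φ X Y * iota F (k+m) v Y)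
          + ∑ Y : Submodule F (Fin (k+m+1) → F), adjEnt q φ X Y * theta F (k+m) v Y := by
      rw [Finset.mul_sum, ← Finset.sum_add_distrib]
      refine Finset.sum_congr rfl fun Y _ => ?_
      simp only [Pi.add_apply, Pi.smul_apply, smul_eq_mul]
      ring
    rw [hsplit]
    simp only [Pi.smul_apply, Pi.add_apply, smul_eq_mul]
    by_cases hX : X ≤ H0 F (k+m)
    · rw [hF1 X hX, hF2 X hX, hθ0 X hX]
      linear_combination iota F (k+m) v X * AlgA
    · rw [hF3 X hX, hF4 X hX, hθv X hX, hιzero X hX]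
      linear_combination iota F (k+m) v (X ⊓ H0 F (k+m)) * AlgB
  · funext X
    rw [hmv]
    simp only [e1]
    have hsplit : ∑ Y : Submodule F (Fin (k+m+1) → F),
        adjEnt q φ X Y * ((φ * (q:ℝ)^m) • iota F (k+m) v - theta F (k+m) v) Y
        = (φ * (q:ℝ)^m) * (∑ Y : Submodule F (Fin (k+m+1) → F),
            adjEnt q φ X Y * iota F (k+m) v Y)
          - ∑ Y : Submodule F (Fin (k+m+1) → F), adjEnt q φ X Y * theta F (k+m) v Y := by
      rw [Finset.mul_sum, ← Finset.sum_sub_distrib]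
      refine Finset.sum_congr rfl fun Y _ => ?_
      simp only [Pi.sub_apply, Pi.smul_apply, smul_eq_mul]
      ring
    rw [hsplit]
    simp only [Pi.smul_apply, Pi.sub_apply, smul_eq_mul]
    by_cases hX : X ≤ H0 F (k+m)
    · rw [hF1 X hX, hF2 X hX, hθ0 X hX]
      linear_combination iota F (k+m) v X * AlgC
    · rw [hF3 X hX, hF4 X hX, hθv X hX, hιzero X hX]
      linear_combination iota F (k+m) v (X ⊓ H0 F (k+m)) * AlgD
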